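/- The function α ↦ V*_α, where V*_α is the variance of ν*_α, is convex on (0,1] and satisfies V*_α ≥ (1/12)(α⁻² - 1) for all α ∈ (0,1], with equality when α⁻¹ is an integer. -/
import Mathlib


/-- The variance of the extremal measure `ν*_α`. -/
noncomputable def Vstar (α : ℝ) : ℝ :=
  1 / 12 * (⌊α⁻¹⌋₊ : ℝ) * (1 + (⌊α⁻¹⌋₊ : ℝ)) * (3 - α - 2 * α * (⌊α⁻¹⌋₊ : ℝ))

lemma floor_facts {x : ℝ} (hx : x ∈ Set.Ioc (0:ℝ) 1) :
    1 ≤ ⌊x⁻¹⌋₊ ∧ (⌊x⁻¹⌋₊ : ℝ) * x ≤ 1 ∧ 1 < ((⌊x⁻¹⌋₊ : ℝ) + 1) * x := by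
  obtain ⟨hx0, hx1⟩ := hx
  have hxinv : (0:ℝ) < x⁻¹ := inv_pos.mpr hx0
  have h1 : (1:ℝ) ≤ x⁻¹ := by
    rw [le_inv_comm₀ one_pos hx0]; simpa using hx1
  refine ⟨Nat.le_floor (by exact_mod_cast h1), ?_, ?_⟩
  · have := Nat.floor_le hxinv.le
    calc (⌊x⁻¹⌋₊ : ℝ) * x ≤ x⁻¹ * x := by nlinarith
    _ = 1 := inv_mul_cancel₀ hx0.ne'
  · have := Nat.lt_floor_add_one (x⁻¹)
    calc (1:ℝ) = x⁻¹ * x := (inv_mul_cancel₀ hx0.ne').symm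
    _ < ((⌊x⁻¹⌋₊ : ℝ) + 1) * x := by nlinarith

/-- Key lemma: each chord line minorizes `Vstar` on `(0,1]`. -/
lemma line_le_Vstar (k : ℕ) (hk : 1 ≤ k) {x : ℝ} (hx : x ∈ Set.Ioc (0:ℝ) 1) :
    1 / 12 * (k : ℝ) * (1 + (k : ℝ)) * (3 - x - 2 * x * (k : ℝ)) ≤ Vstar x := by
  obtain ⟨hj1, hjx, hjx'⟩ := floor_facts hx
  have hx0 := hx.1
  set j := ⌊x⁻¹⌋₊ with hjdef
  have hk' : (1:ℝ) ≤ (k:ℝ) := by exact_mod_cast hk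
  have hj' : (1:ℝ) ≤ (j:ℝ) := by exact_mod_cast hj1
  show _ ≤ 1 / 12 * (j : ℝ) * (1 + (j : ℝ)) * (3 - x - 2 * x * (j : ℝ))
  rcases lt_trichotomy k j with h | h | h
  · -- k + 1 ≤ j
    have hkj : (k:ℝ) + 1 ≤ (j:ℝ) := by exact_mod_cast h
    have P1 : (0:ℝ) ≤ ((j:ℝ)-k) * ((j:ℝ)-k-1) * ((j:ℝ)+2*k+1) :=
      mul_nonneg (mul_nonneg (by linarith) (by linarith)) (by linarith)
    have P2 : (0:ℝ) ≤ (((j:ℝ)-k) * (2*((j:ℝ)^2+(j:ℝ)*k+(k:ℝ)^2)+3*((j:ℝ)+k)+1)) * (1 - (j:ℝ)*x) :=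
      mul_nonneg (mul_nonneg (by linarith) (by nlinarith)) (by linarith)
    have main : (0:ℝ) ≤ (j:ℝ)*(1+(j:ℝ))*(3-x-2*x*(j:ℝ)) - (k:ℝ)*(1+(k:ℝ))*(3-x-2*x*(k:ℝ)) := by
      nlinarith [P1, P2, hj']
    linarith
  · rw [h]
  · -- j + 1 ≤ k
    have hkj : (j:ℝ) + 1 ≤ (k:ℝ) := by exact_mod_cast h
    have P1 : (0:ℝ) ≤ ((k:ℝ)-j) * ((k:ℝ)-j-1) * (2*(k:ℝ)+(j:ℝ)+2) :=
      mul_nonneg (mul_nonneg (by linarith) (by linarith)) (by linarith)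
    have P2 : (0:ℝ) ≤ (((k:ℝ)-j) * (2*((j:ℝ)^2+(j:ℝ)*k+(k:ℝ)^2)+3*((j:ℝ)+k)+1)) * (((j:ℝ)+1)*x - 1) :=
      mul_nonneg (mul_nonneg (by linarith) (by nlinarith)) (by linarith)
    have main : (0:ℝ) ≤ (j:ℝ)*(1+(j:ℝ))*(3-x-2*x*(j:ℝ)) - (k:ℝ)*(1+(k:ℝ))*(3-x-2*x*(k:ℝ)) := by
      nlinarith [P1, P2, hj']
    linarith

theorem Vstar_convex_and_lower_bound :
    ConvexOn ℝ (Set.Ioc (0 : ℝ) 1) Vstar ∧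
    (∀ α ∈ Set.Ioc (0 : ℝ) 1, 1 / 12 * (α⁻¹ ^ 2 - 1) ≤ Vstar α) ∧
    (∀ k : ℕ, 1 ≤ k → Vstar ((k : ℝ)⁻¹) = 1 / 12 * (((k : ℝ)⁻¹)⁻¹ ^ 2 - 1)) := by
  refine ⟨⟨convex_Ioc 0 1, ?_⟩, ?_, ?_⟩
  · intro x hx y hy a b ha hb hab
    have hz : a • x + b • y ∈ Set.Ioc (0:ℝ) 1 := (convex_Ioc 0 1) hx hy ha hb hab
    simp only [smul_eq_mul] at hz ⊢
    set z := a * x + b * y with hzdef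
    obtain ⟨hm1, -, -⟩ := floor_facts hz
    set m := ⌊z⁻¹⌋₊ with hmdef
    have hVz : Vstar z = 1 / 12 * (m:ℝ) * (1 + (m:ℝ)) * (3 - z - 2 * z * (m:ℝ)) := rfl
    have hxle := line_le_Vstar m hm1 hx
    have hyle := line_le_Vstar m hm1 hy
    have hsplit : Vstar z =
        a * (1 / 12 * (m:ℝ) * (1 + (m:ℝ)) * (3 - x - 2 * x * (m:ℝ))) +
        b * (1 / 12 * (m:ℝ) * (1 + (m:ℝ)) * (3 - y - 2 * y * (m:ℝ))) := by
      rw [hVz, hzdef]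
      linear_combination (-(1/4) * ((m:ℝ) + (m:ℝ)^2)) * hab
    rw [hsplit]
    exact add_le_add (mul_le_mul_of_nonneg_left hxle ha) (mul_le_mul_of_nonneg_left hyle hb)
  · intro x hx
    obtain ⟨hj1, hjx, hjx'⟩ := floor_facts hx
    have hx0 := hx.1
    set j := ⌊x⁻¹⌋₊ with hjdef
    have hj' : (1:ℝ) ≤ (j:ℝ) := by exact_mod_cast hj1
    have hVx : Vstar x = 1 / 12 * (j:ℝ) * (1 + (j:ℝ)) * (3 - x - 2 * x * (j:ℝ)) := rfl
    rw [hVx]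
    have key : (0:ℝ) ≤ (1 - (j:ℝ)*x) * (((j:ℝ)+1)*x - 1) * (1 + (2*(j:ℝ)+1)*x) :=
      mul_nonneg (mul_nonneg (by linarith) (by linarith)) (by nlinarith)
    have e : 1/12 * (x⁻¹^2 - 1) = (1 - x^2)/(12*x^2) := by
      field_simp
    rw [e, div_le_iff₀ (by positivity)]
    nlinarith [key]
  · intro k hk
    have hk0 : (k:ℝ) ≠ 0 := Nat.cast_ne_zero.2 (by omega)
    unfold Vstar
    rw [inv_inv, Nat.floor_natCast]
    field_simp
    ring
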